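/- Let p be a prime number and let R be a commutative ring of characteristic p. Let P(X,Y) := ∑_{i=1}^{p−1} (1/p)·binom(p,i)·X^{p−i}·Y^{i} ∈ ℤ[X,Y] (the coefficients are integers since p divides binom(p,i) for 0 < i < p). Then for all r₁, r₂ ∈ R, the identity (r₁+r₂)^{p−1}·d(r₁+r₂) − r₁^{p−1}·d r₁ − r₂^{p−1}·d r₂ = d(P(r₁,r₂)) holds in Ω¹_{R/ℤ}, where P(r₁,r₂) denotes the evaluation of the polynomial P at (r₁, r₂). -/

import Mathlib

open MvPolynomial

private lemma psmul_inj (p : ℕ) (hp : p.Prime)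
    (ω₁ ω₂ : Ω[MvPolynomial (Fin 2) ℤ⁄ℤ]) (h : p • ω₁ = p • ω₂) : ω₁ = ω₂ := by
  apply (KaehlerDifferential.mvPolynomialBasis ℤ (Fin 2)).repr.injective
  refine Finsupp.ext fun i => ?_
  have := DFunLike.congr_fun (congrArg (KaehlerDifferential.mvPolynomialBasis ℤ (Fin 2)).repr h) i
  simp only [map_nsmul, Finsupp.coe_smul, Pi.smul_apply, nsmul_eq_mul] at this
  exact mul_left_cancel₀
    (Nat.cast_ne_zero.mpr hp.ne_zero : (p : MvPolynomial (Fin 2) ℤ) ≠ 0) this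

private lemma aux_poly (p : ℕ) (hp : p.Prime) :
    (X 0 + X 1 : MvPolynomial (Fin 2) ℤ) ^ (p - 1) •
          (KaehlerDifferential.D ℤ (MvPolynomial (Fin 2) ℤ)) (X 0 + X 1)
        - (X 0 : MvPolynomial (Fin 2) ℤ) ^ (p - 1) •
          (KaehlerDifferential.D ℤ (MvPolynomial (Fin 2) ℤ)) (X 0)
        - (X 1 : MvPolynomial (Fin 2) ℤ) ^ (p - 1) •
          (KaehlerDifferential.D ℤ (MvPolynomial (Fin 2) ℤ)) (X 1)
      = (KaehlerDifferential.D ℤ (MvPolynomial (Fin 2) ℤ))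
          (∑ i ∈ Finset.Ioo 0 p, ((p.choose i / p : ℕ) : MvPolynomial (Fin 2) ℤ)
            * ((X 0 : MvPolynomial (Fin 2) ℤ) ^ (p - i) * (X 1) ^ i)) := by
  set A := MvPolynomial (Fin 2) ℤ
  set D := KaehlerDifferential.D ℤ A
  apply psmul_inj p hp
  have hpow : ∀ a : A, p • (a ^ (p - 1) • D a) = D (a ^ p) := by
    intro a
    rw [Derivation.leibniz_pow]
  rw [smul_sub, smul_sub, hpow, hpow, hpow]
  have key := (add_pow_prime_eq' hp (X 1 : A) (X 0))
  have : D ((X 0 + X 1 : A) ^ p) - D ((X 0 : A) ^ p) - D ((X 1 : A) ^ p)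
      = D ((p : A) * ∑ i ∈ Finset.Ioo 0 p, (X 1 : A) ^ i * (X 0) ^ (p - i)
          * ((p.choose i / p : ℕ) : A)) := by
    rw [← map_sub, ← map_sub]
    congr 1
    rw [add_comm (X 0 : A) (X 1), key]
    ring
  rw [this, Derivation.leibniz]
  have hD : D ((p : A)) = 0 := by
    have : ((p : ℕ) : A) = algebraMap ℤ A (p : ℤ) := by push_cast; rfl
    rw [this, Derivation.map_algebraMap]
  rw [hD, smul_zero, add_zero, ← Nat.cast_smul_eq_nsmul A p]
  congr 2
  refine Finset.sum_congr rfl fun i _ => ?_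
  ring

theorem inverse_cartier_additive_mod_exact (p : ℕ) (hp : p.Prime) (R : Type*) [CommRing R]
    [CharP R p] (r₁ r₂ : R) :
    (r₁ + r₂) ^ (p - 1) • (KaehlerDifferential.D ℤ R) (r₁ + r₂)
        - r₁ ^ (p - 1) • (KaehlerDifferential.D ℤ R) r₁
        - r₂ ^ (p - 1) • (KaehlerDifferential.D ℤ R) r₂
      = (KaehlerDifferential.D ℤ R)
          (∑ i ∈ Finset.Ioo 0 p, ((p.choose i / p : ℕ) : R) * (r₁ ^ (p - i) * r₂ ^ i)) := by
  set A := MvPolynomial (Fin 2) ℤ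
  let f : A →ₐ[ℤ] R := MvPolynomial.aeval ![r₁, r₂]
  letI : Algebra A R := f.toRingHom.toAlgebra
  haveI : IsScalarTower ℤ A R := IsScalarTower.of_algebraMap_eq' f.comp_algebraMap.symm
  have halg : ∀ a : A, algebraMap A R a = f a := fun a => rfl
  have hsmul : ∀ (a : A) (ω : Ω[R⁄ℤ]), a • ω = f a • ω := fun a ω =>
    (algebraMap_smul R a ω).symm
  have e2 : f (X 0) = r₁ := by
    show (MvPolynomial.aeval ![r₁, r₂]) (X 0) = r₁; simp
  have e3 : f (X 1) = r₂ := by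
    show (MvPolynomial.aeval ![r₁, r₂]) (X 1) = r₂; simp
  have e1 : f (X 0 + X 1) = r₁ + r₂ := by rw [map_add, e2, e3]
  have e4 : f ((X 0 + X 1 : A) ^ (p - 1)) = (r₁ + r₂) ^ (p - 1) := by rw [map_pow, e1]
  have e5 : f ((X 0 : A) ^ (p - 1)) = r₁ ^ (p - 1) := by rw [map_pow, e2]
  have e6 : f ((X 1 : A) ^ (p - 1)) = r₂ ^ (p - 1) := by rw [map_pow, e3]
  have e7 : f (∑ i ∈ Finset.Ioo 0 p, ((p.choose i / p : ℕ) : A)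
        * ((X 0 : A) ^ (p - i) * (X 1) ^ i))
      = ∑ i ∈ Finset.Ioo 0 p, ((p.choose i / p : ℕ) : R) * (r₁ ^ (p - i) * r₂ ^ i) := by
    rw [map_sum]
    refine Finset.sum_congr rfl fun i _ => ?_
    rw [map_mul, map_natCast, map_mul, map_pow, map_pow, e2, e3]
  have h := congrArg (KaehlerDifferential.map ℤ ℤ A R) (aux_poly p hp)
  simp only [map_sub, LinearMap.map_smul_of_tower, KaehlerDifferential.map_D, halg] at h
  rw [KaehlerDifferential.map_D ℤ ℤ A R, KaehlerDifferential.map_D ℤ ℤ A R, KaehlerDifferential.map_D ℤ ℤ A R, KaehlerDifferential.map_D ℤ ℤ A R] at h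
  simp only [halg] at h
  rw [hsmul, hsmul, hsmul, e1, e2, e3, e4, e5, e6, e7] at h
  exact h
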